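/- Let (A,[·,·],{·,·,·},α) be a Hom-Bol superalgebra and n ≥ 0. Define x[·]^{(n)}y := α^{2^n - 1}([x,y]) and {x,y,z}^{(n)} := α^{2^{n+1} - 2}({x,y,z}). Then the n-th derived Hom-superalgebra (A, [·,·]^{(n)}, {·,·,·}^{(n)}, α^{2^n}) is a Hom-Bol superalgebra. -/

import Mathlib

def sgn (K : Type*) [Field K] (i j : ZMod 2) : K := (-1 : K) ^ (i * j).val

def IsBilin (K : Type*) {A : Type*} [Field K] [AddCommGroup A] [Module K A]
    (f : A → A → A) : Prop :=
  (∀ (c : K) (x y : A), f (c • x) y = c • f x y) ∧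
  (∀ x x' y : A, f (x + x') y = f x y + f x' y) ∧
  (∀ (c : K) (x y : A), f x (c • y) = c • f x y) ∧
  (∀ x y y' : A, f x (y + y') = f x y + f x y')

def IsTrilin (K : Type*) {A : Type*} [Field K] [AddCommGroup A] [Module K A]
    (f : A → A → A → A) : Prop :=
  (∀ (c : K) (x y z : A), f (c • x) y z = c • f x y z) ∧
  (∀ x x' y z : A, f (x + x') y z = f x y z + f x' y z) ∧
  (∀ (c : K) (x y z : A), f x (c • y) z = c • f x y z) ∧
  (∀ x y y' z : A, f x (y + y') z = f x y z + f x y' z) ∧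
  (∀ (c : K) (x y z : A), f x y (c • z) = c • f x y z) ∧
  (∀ x y z z' : A, f x y (z + z') = f x y z + f x y z')

def asc {A : Type*} [AddCommGroup A] (mul : A → A → A) (x y z : A) : A :=
  mul (mul x y) z - mul x (mul y z)

def hasc {A : Type*} [AddCommGroup A] (mul : A → A → A) (α : A → A) (x y z : A) : A :=
  mul (mul x y) (α z) - mul (α x) (mul y z)

def br (K : Type*) {A : Type*} [Field K] [AddCommGroup A] [Module K A]
    (mul : A → A → A) (i j : ZMod 2) (x y : A) : A :=
  (2 : K)⁻¹ • (mul x y - sgn K i j • mul y x)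

def jp (K : Type*) {A : Type*} [Field K] [AddCommGroup A] [Module K A]
    (mul : A → A → A) (i j : ZMod 2) (x y : A) : A :=
  (2 : K)⁻¹ • (mul x y + sgn K i j • mul y x)

/-- A Hom-Bol superalgebra structure on a graded module. -/
structure IsHomBol (K : Type*) {A : Type*} [Field K] [AddCommGroup A] [Module K A]
    (𝒜 : ZMod 2 → Submodule K A) (brk : A → A → A) (tr : A → A → A → A)
    (α : A → A) : Prop where
  brk_bilin : IsBilin K brk
  tr_trilin : IsTrilin K tr
  alpha_smul : ∀ (c : K) (x : A), α (c • x) = c • α x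
  alpha_add : ∀ x y : A, α (x + y) = α x + α y
  alpha_even : ∀ (i : ZMod 2) (x : A), x ∈ 𝒜 i → α x ∈ 𝒜 i
  brk_grade : ∀ (i j : ZMod 2) (x y : A), x ∈ 𝒜 i → y ∈ 𝒜 j → brk x y ∈ 𝒜 (i + j)
  tr_grade : ∀ (i j k : ZMod 2) (x y z : A),
    x ∈ 𝒜 i → y ∈ 𝒜 j → z ∈ 𝒜 k → tr x y z ∈ 𝒜 (i + j + k)
  brk_mult : ∀ x y : A, α (brk x y) = brk (α x) (α y)
  tr_mult : ∀ x y z : A, α (tr x y z) = tr (α x) (α y) (α z)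
  shb1 : ∀ (i j : ZMod 2) (x y : A), x ∈ 𝒜 i → y ∈ 𝒜 j →
    brk x y = (-(sgn K i j)) • brk y x
  shb2 : ∀ (i j k : ZMod 2) (x y z : A), x ∈ 𝒜 i → y ∈ 𝒜 j → z ∈ 𝒜 k →
    tr x y z = (-(sgn K i j)) • tr y x z
  shb3 : ∀ (i j k : ZMod 2) (x y z : A), x ∈ 𝒜 i → y ∈ 𝒜 j → z ∈ 𝒜 k →
    tr x y z + sgn K i (j + k) • tr y z x + sgn K k (i + j) • tr z x y = 0
  shb4 : ∀ (i j p q : ZMod 2) (x y u v : A),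
    x ∈ 𝒜 i → y ∈ 𝒜 j → u ∈ 𝒜 p → v ∈ 𝒜 q →
    tr (α x) (α y) (brk u v)
      = brk (tr x y u) (α (α v)) + sgn K p (i + j) • brk (α (α u)) (tr x y v)
        + sgn K (i + j) (p + q) •
          (tr (α u) (α v) (brk x y) - brk (brk (α u) (α v)) (brk (α x) (α y)))
  shb5 : ∀ (i j p q r : ZMod 2) (x y u v w : A),
    x ∈ 𝒜 i → y ∈ 𝒜 j → u ∈ 𝒜 p → v ∈ 𝒜 q → w ∈ 𝒜 r →
    tr (α (α x)) (α (α y)) (tr u v w)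
      = tr (tr x y u) (α (α v)) (α (α w))
        + sgn K p (i + j) • tr (α (α u)) (tr x y v) (α (α w))
        + sgn K (i + j) (p + q) • tr (α (α u)) (α (α v)) (tr x y w)

theorem derivedHomBol {K A : Type*} [Field K] [AddCommGroup A] [Module K A]
    (𝒜 : ZMod 2 → Submodule K A)
    (brk : A → A → A) (tr : A → A → A → A) (α : A → A)
    (hB : IsHomBol K 𝒜 brk tr α) (m : ℕ) :
    IsHomBol K 𝒜 (fun x y => α^[m] (brk x y))
      (fun x y z => α^[2 * m] (tr x y z))
      (fun x => α^[m + 1] x) := by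
  obtain ⟨b1, b2, b3, b4⟩ := hB.brk_bilin
  obtain ⟨t1, t2, t3, t4, t5, t6⟩ := hB.tr_trilin
  have hA : ∀ (k : ℕ) (x y : A), α^[k] (x + y) = α^[k] x + α^[k] y := by
    intro k
    induction k with
    | zero => intro x y; simp
    | succ k ih =>
        intro x y
        simp only [Function.iterate_succ_apply', ih, hB.alpha_add]
  have hS : ∀ (k : ℕ) (c : K) (x : A), α^[k] (c • x) = c • α^[k] x := by
    intro k
    induction k with
    | zero => intro c x; simp
    | succ k ih =>
        intro c x
        simp only [Function.iterate_succ_apply', ih, hB.alpha_smul]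
  have hZ : ∀ (k : ℕ), α^[k] (0 : A) = 0 := by
    intro k
    have := hS k 0 0
    simpa using this
  have hSub : ∀ (k : ℕ) (x y : A), α^[k] (x - y) = α^[k] x - α^[k] y := by
    intro k x y
    rw [sub_eq_add_neg, hA, ← neg_one_smul K y, hS, neg_one_smul, ← sub_eq_add_neg]
  have hG : ∀ (k : ℕ) (i : ZMod 2) (x : A), x ∈ 𝒜 i → α^[k] x ∈ 𝒜 i := by
    intro k
    induction k with
    | zero => intro i x hx; simpa using hx
    | succ k ih =>
        intro i x hx
        rw [Function.iterate_succ_apply']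
        exact hB.alpha_even _ _ (ih i x hx)
  have hBr : ∀ (k : ℕ) (x y : A), α^[k] (brk x y) = brk (α^[k] x) (α^[k] y) := by
    intro k
    induction k with
    | zero => intro x y; simp
    | succ k ih =>
        intro x y
        simp only [Function.iterate_succ_apply', ih, hB.brk_mult]
  have hTr : ∀ (k : ℕ) (x y z : A),
      α^[k] (tr x y z) = tr (α^[k] x) (α^[k] y) (α^[k] z) := by
    intro k
    induction k with
    | zero => intro x y z; simp
    | succ k ih =>
        intro x y z
        simp only [Function.iterate_succ_apply', ih, hB.tr_mult]
  have hcomm : ∀ (k : ℕ) (x : A), α (α^[k] x) = α^[k] (α x) := by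
    intro k x
    exact (Function.iterate_succ_apply' α k x).symm.trans
      (Function.iterate_succ_apply α k x)
  refine { brk_bilin := ⟨?_, ?_, ?_, ?_⟩, tr_trilin := ⟨?_, ?_, ?_, ?_, ?_, ?_⟩,
           alpha_smul := ?_, alpha_add := ?_, alpha_even := ?_, brk_grade := ?_,
           tr_grade := ?_, brk_mult := ?_, tr_mult := ?_, shb1 := ?_, shb2 := ?_,
           shb3 := ?_, shb4 := ?_, shb5 := ?_ }
  · intro c x y; dsimp only; rw [b1, hS]
  · intro x x' y; dsimp only; rw [b2, hA]
  · intro c x y; dsimp only; rw [b3, hS]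
  · intro x y y'; dsimp only; rw [b4, hA]
  · intro c x y z; dsimp only; rw [t1, hS]
  · intro x x' y z; dsimp only; rw [t2, hA]
  · intro c x y z; dsimp only; rw [t3, hS]
  · intro x y y' z; dsimp only; rw [t4, hA]
  · intro c x y z; dsimp only; rw [t5, hS]
  · intro x y z z'; dsimp only; rw [t6, hA]
  · intro c x; rw [hS]
  · intro x y; rw [hA]
  · intro i x hx; exact hG _ _ _ hx
  · intro i j x y hx hy; exact hG _ _ _ (hB.brk_grade i j x y hx hy)
  · intro i j k x y z hx hy hz
    exact hG _ _ _ (hB.tr_grade i j k x y z hx hy hz)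
  · intro x y
    rw [← hBr (m + 1), ← Function.iterate_add_apply, ← Function.iterate_add_apply,
      Nat.add_comm]
  · intro x y z
    rw [← hTr (m + 1), ← Function.iterate_add_apply, ← Function.iterate_add_apply,
      Nat.add_comm]
  · intro i j x y hx hy
    rw [hB.shb1 i j x y hx hy, hS]
  · intro i j k x y z hx hy hz
    rw [hB.shb2 i j k x y z hx hy hz, hS]
  · intro i j k x y z hx hy hz
    simp only [← hS, ← hA]
    rw [hB.shb3 i j k x y z hx hy hz, hZ]
  · intro i j p q x y u v hx hy hu hv
    simp only [two_mul, Function.iterate_add_apply, Function.iterate_one, hcomm,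
      ← hBr, ← hTr]
    rw [hB.shb4 i j p q x y u v hx hy hu hv]
    simp only [hA, hS, hSub]
  · intro i j p q r x y u v w hx hy hu hv hw
    simp only [two_mul, Function.iterate_add_apply, Function.iterate_one, hcomm,
      ← hBr, ← hTr]
    rw [hB.shb5 i j p q r x y u v w hx hy hu hv hw]
    simp only [hA, hS]

/-- Theorem 5.2: the n-th derived Hom-superalgebra of a Hom-Bol superalgebra is
a Hom-Bol superalgebra. -/
theorem stmt9 {K A : Type*} [Field K] [AddCommGroup A] [Module K A]
    (𝒜 : ZMod 2 → Submodule K A) (hds : DirectSum.IsInternal 𝒜)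
    (brk : A → A → A) (tr : A → A → A → A) (α : A → A)
    (hB : IsHomBol K 𝒜 brk tr α) (n : ℕ) :
    IsHomBol K 𝒜 (fun x y => α^[2 ^ n - 1] (brk x y))
      (fun x y z => α^[2 ^ (n + 1) - 2] (tr x y z))
      (fun x => α^[2 ^ n] x) := by
  obtain ⟨m, hm⟩ : ∃ m, 2 ^ n = m + 1 := ⟨2 ^ n - 1, by have := Nat.one_le_two_pow (n := n); omega⟩
  have h1 : 2 ^ n - 1 = m := by omega
  have h2 : 2 ^ (n + 1) - 2 = 2 * m := by rw [pow_succ]; omega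
  simp only [h1, h2, hm]
  exact derivedHomBol 𝒜 brk tr α hB m
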